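/- arXiv:2205.12601 — 2 statements merged into one kernel-verified Lean document; each statement's English description precedes it below -/
import Mathlib

section
/- For any W, L ∈ ℕ there exists φ ∈ NN_{2,1}(9W+1, L) such that for all x, x′, y, y′ ∈ [−1,1]: |xy − φ(x,y)| ≤ 6·W^{−L} and |φ(x,y) − φ(x′,y′)| ≤ 7|x−x′| + 7|y−y′|. -/
open Finset
open scoped BigOperators

/-- ReLU activation. -/
noncomputable def relu (x : ℝ) : ℝ := max x 0

/-- Parameters of a fully connected feed-forward ReLU neural network with input
dimension `d` and output dimension `k`. -/
structure MLP (d k : ℕ) where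
  depth : ℕ
  width : ℕ → ℕ
  width_in : width 0 = d
  width_out : width (depth + 1) = k
  A : (ℓ : ℕ) → Matrix (Fin (width (ℓ + 1))) (Fin (width ℓ)) ℝ
  b : (ℓ : ℕ) → Fin (width (ℓ + 1)) → ℝ

namespace MLP

variable {d k : ℕ}

/-- Hidden layer outputs: `φ₀(x) = x`, `φ_{ℓ+1}(x) = σ(A_ℓ φ_ℓ(x) + b_ℓ)`. -/
noncomputable def layer (φ : MLP d k) (x : Fin d → ℝ) : (ℓ : ℕ) → Fin (φ.width ℓ) → ℝ
  | 0 => fun i => x (Fin.cast φ.width_in i)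
  | ℓ + 1 => fun i => relu ((φ.A ℓ).mulVec (layer φ x ℓ) i + φ.b ℓ i)

/-- The function computed by the network: `φ(x) = A_L φ_L(x) + b_L`. -/
noncomputable def eval (φ : MLP d k) (x : Fin d → ℝ) : Fin k → ℝ := fun j =>
  (φ.A φ.depth).mulVec (φ.layer x φ.depth) (Fin.cast φ.width_out.symm j) +
    φ.b φ.depth (Fin.cast φ.width_out.symm j)

/-- Maximum ℓ¹-norm of the rows of the augmented matrix `(A, b)`. -/
noncomputable def augNorm {m n : ℕ} (A : Matrix (Fin m) (Fin n) ℝ) (b : Fin m → ℝ) : ℝ :=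
  ⨆ i : Fin m, ((∑ j, |A i j|) + |b i|)

/-- The norm constraint `κ(θ) = ‖(A_L,b_L)‖ ∏_{ℓ<L} max{‖(A_ℓ,b_ℓ)‖, 1}`. -/
noncomputable def kappa (φ : MLP d k) : ℝ :=
  augNorm (φ.A φ.depth) (φ.b φ.depth) *
    ∏ ℓ ∈ Finset.range φ.depth, max (augNorm (φ.A ℓ) (φ.b ℓ)) 1

end MLP

/-- The class `NN_{d,k}(W, L)` of ReLU networks with width at most `W` and depth `L`. -/
def NNSet (d k W L : ℕ) : Set ((Fin d → ℝ) → Fin k → ℝ) :=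
  {f | ∃ φ : MLP d k, φ.depth = L ∧ (∀ ℓ, 1 ≤ ℓ → ℓ ≤ L → φ.width ℓ ≤ W) ∧ f = φ.eval}

/-- The norm-constrained class `NN_{d,k}(W, L, K)`. -/
def NNSetNorm (d k W L : ℕ) (K : ℝ) : Set ((Fin d → ℝ) → Fin k → ℝ) :=
  {f | ∃ φ : MLP d k, φ.depth = L ∧ (∀ ℓ, 1 ≤ ℓ → ℓ ≤ L → φ.width ℓ ≤ W) ∧
      φ.kappa ≤ K ∧ f = φ.eval}

/-- Scalar-valued networks `NN_{d,1}(W, L)`, viewed as maps `ℝ^d → ℝ`. -/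
def NNScalar (d W L : ℕ) : Set ((Fin d → ℝ) → ℝ) :=
  {f | ∃ g ∈ NNSet d 1 W L, f = fun x => g x 0}

/-- Scalar-valued norm-constrained networks `NN_{d,1}(W, L, K)`, viewed as maps `ℝ^d → ℝ`. -/
def NNScalarNorm (d W L : ℕ) (K : ℝ) : Set ((Fin d → ℝ) → ℝ) :=
  {f | ∃ g ∈ NNSetNorm d 1 W L K, f = fun x => g x 0}

/-- Networks `NN_{1,k}(W, L)` with one-dimensional input, viewed as maps `ℝ → ℝ^k`. -/
def NNFromReal (k W L : ℕ) : Set (ℝ → Fin k → ℝ) :=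
  {f | ∃ g ∈ NNSet 1 k W L, f = fun t => g (fun _ => t)}

/-- Norm-constrained networks `NN_{1,1}(W, L, K)`, viewed as maps `ℝ → ℝ`. -/
def NNRealScalarNorm (W L : ℕ) (K : ℝ) : Set (ℝ → ℝ) :=
  {f | ∃ g ∈ NNSetNorm 1 1 W L K, f = fun t => g (fun _ => t) 0}



lemma relu_of_nonneg {x : ℝ} (h : 0 ≤ x) : relu x = x := max_eq_left h
lemma relu_of_nonpos {x : ℝ} (h : x ≤ 0) : relu x = 0 := max_eq_right h

noncomputable def qq (z : ℝ) : ℝ := |z - round z|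

lemma qq_nonneg (z : ℝ) : 0 ≤ qq z := abs_nonneg _
lemma qq_le_half (z : ℝ) : qq z ≤ 1/2 := abs_sub_round z
lemma qq_min (z : ℝ) (k : ℤ) : qq z ≤ |z - k| := round_le z k

lemma qq_add_int (z : ℝ) (k : ℤ) : qq (z + k) = qq z := by
  unfold qq; rw [round_add_intCast]; push_cast; ring_nf

lemma qq_neg (z : ℝ) : qq (-z) = qq z := by
  have h1 : qq (-z) ≤ qq z := by
    calc qq (-z) ≤ |(-z) - (-(round z) : ℤ)| := qq_min (-z) (-(round z))
    _ = |z - round z| := by push_cast; rw [← abs_neg]; ring_nf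
    _ = qq z := rfl
  have h2 : qq z ≤ qq (-z) := by
    calc qq z ≤ |z - (-(round (-z)) : ℤ)| := qq_min z (-(round (-z)))
    _ = |(-z) - round (-z)| := by push_cast; rw [← abs_neg]; ring_nf
    _ = qq (-z) := rfl
  linarith

lemma qq_lip (a b : ℝ) : |qq a - qq b| ≤ |a - b| := by
  have h1 : qq a ≤ |a - b| + qq b := by
    calc qq a ≤ |a - round b| := qq_min a (round b)
    _ = |(a - b) + (b - round b)| := by ring_nf
    _ ≤ |a - b| + |b - round b| := abs_add_le _ _
  have h2 : qq b ≤ |a - b| + qq a := by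
    calc qq b ≤ |b - round a| := qq_min b (round a)
    _ = |(b - a) + (a - round a)| := by ring_nf
    _ ≤ |b - a| + |a - round a| := abs_add_le _ _
    _ = |a - b| + qq a := by rw [abs_sub_comm b a]; rfl
  rw [abs_sub_le_iff]; constructor <;> linarith

lemma qq_interval (n : ℤ) (z : ℝ) (h1 : (n : ℝ) ≤ z) (h2 : z ≤ (n : ℝ) + 1) :
    qq z = min (z - n) ((n : ℝ) + 1 - z) := by
  have hr1 : n ≤ round z := by
    rw [round_eq, Int.le_floor]; push_cast; linarith
  have hr2 : round z ≤ n + 1 := by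
    have : round z < n + 2 := by
      rw [round_eq, Int.floor_lt]; push_cast; linarith
    omega
  have hcase : round z = n ∨ round z = n + 1 := by omega
  rcases hcase with h | h
  · have hq : qq z = z - n := by rw [qq, h]; exact abs_of_nonneg (by linarith)
    have hle : qq z ≤ (n:ℝ) + 1 - z := by
      have h3 := qq_min z (n+1)
      rw [abs_of_nonpos (by push_cast; linarith)] at h3
      push_cast at h3; linarith
    rw [hq, min_eq_left (by linarith)]
  · have hq : qq z = (n:ℝ) + 1 - z := by
      rw [qq, h]; push_cast
      rw [abs_of_nonpos (by linarith)]; ring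
    have hle : qq z ≤ z - n := by
      have h3 := qq_min z n
      rw [abs_of_nonneg (by linarith)] at h3; linarith
    rw [hq, min_eq_right (by linarith)]
noncomputable def pf (z : ℝ) : ℝ := qq z * (1 - qq z)
noncomputable def wf (z : ℝ) : ℝ := 2 * qq (z / 2)

lemma pf_nonneg (z : ℝ) : 0 ≤ pf z := by
  have := qq_nonneg z; have := qq_le_half z
  unfold pf; nlinarith

lemma pf_le_quarter (z : ℝ) : pf z ≤ 1/4 := by
  have := qq_nonneg z; have := qq_le_half z
  unfold pf; nlinarith

lemma pf_lip (a b : ℝ) : |pf a - pf b| ≤ |a - b| := by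
  have h : pf a - pf b = (qq a - qq b) * (1 - qq a - qq b) := by unfold pf; ring
  rw [h, abs_mul]
  have h1 : |1 - qq a - qq b| ≤ 1 := by
    have := qq_nonneg a; have := qq_nonneg b; have := qq_le_half a; have := qq_le_half b
    rw [abs_le]; constructor <;> linarith
  calc |qq a - qq b| * |1 - qq a - qq b| ≤ |a - b| * 1 :=
        mul_le_mul (qq_lip a b) h1 (abs_nonneg _) (abs_nonneg _)
  _ = |a - b| := mul_one _

lemma pf_interval (n : ℤ) (z : ℝ) (h1 : (n : ℝ) ≤ z) (h2 : z ≤ (n : ℝ) + 1) :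
    pf z = (z - n) * ((n : ℝ) + 1 - z) := by
  unfold pf
  rw [qq_interval n z h1 h2]
  rcases min_cases (z - (n:ℝ)) ((n:ℝ) + 1 - z) with ⟨h, _⟩ | ⟨h, _⟩ <;> rw [h] <;> ring

lemma wf_nonneg (z : ℝ) : 0 ≤ wf z := by
  have := qq_nonneg (z/2); unfold wf; linarith

lemma wf_le_one (z : ℝ) : wf z ≤ 1 := by
  have := qq_le_half (z/2); unfold wf; linarith

lemma wf_id {z : ℝ} (h1 : 0 ≤ z) (h2 : z ≤ 1) : wf z = z := by
  unfold wf
  rw [qq_interval 0 (z/2) (by linarith) (by push_cast; linarith)]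
  push_cast
  rw [min_eq_left (by linarith)]; ring

lemma wf_interval (j : ℕ) (z : ℝ) (h1 : (j : ℝ) ≤ z) (h2 : z ≤ (j : ℝ) + 1) :
    wf z = if Even j then z - j else (j : ℝ) + 1 - z := by
  rcases Nat.even_or_odd j with he | ho
  · obtain ⟨a, rfl⟩ := he
    rw [if_pos (by exact ⟨a, rfl⟩)]
    unfold wf
    push_cast at *
    rw [qq_interval a (z/2) (by push_cast; linarith) (by push_cast; linarith)]
    push_cast
    rw [min_eq_left (by linarith)]; ring
  · obtain ⟨a, rfl⟩ := ho
    rw [if_neg (by simp [Nat.even_add_one, Nat.even_mul])]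
    unfold wf
    push_cast at *
    rw [qq_interval a (z/2) (by push_cast; linarith) (by push_cast; linarith)]
    push_cast
    rw [min_eq_right (by linarith)]; ring

lemma wf_shape (z : ℝ) : ∃ k : ℤ, wf z = z - 2*k ∨ wf z = -(z - 2*k) := by
  refine ⟨round (z/2), ?_⟩
  unfold wf qq
  rcases abs_cases (z/2 - round (z/2)) with ⟨h, _⟩ | ⟨h, _⟩
  · left; rw [h]; ring
  · right; rw [h]; ring

lemma qq_nat_mul_wf (m : ℕ) (z : ℝ) : qq (m * wf z) = qq (m * z) := by
  obtain ⟨k, h | h⟩ := wf_shape z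
  · rw [h]
    have : (m:ℝ) * (z - 2*k) = m * z + (-(2 * m * k) : ℤ) := by push_cast; ring
    rw [this, qq_add_int]
  · rw [h]
    have : (m:ℝ) * (-(z - 2*k)) = -(m * z + (-(2 * m * k) : ℤ)) := by push_cast; ring
    rw [this, qq_neg, qq_add_int]

lemma wf_nat_mul_wf (m : ℕ) (z : ℝ) : wf (m * wf z) = wf (m * z) := by
  obtain ⟨k, h | h⟩ := wf_shape z
  · rw [h]
    unfold wf
    have : (m:ℝ) * (z - 2*k) / 2 = m * z / 2 + (-(m * k) : ℤ) := by push_cast; ring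
    rw [this, qq_add_int]
  · rw [h]
    unfold wf
    have : (m:ℝ) * (-(z - 2*k)) / 2 = -(m * z / 2 + (-(m * k) : ℤ)) := by push_cast; ring
    rw [this, qq_neg, qq_add_int]

lemma pf_wf (m : ℕ) (z : ℝ) : pf ((m:ℝ) * wf z) = pf ((m:ℝ) * z) := by
  unfold pf; rw [qq_nat_mul_wf]
open Finset

noncomputable def cc (W k : ℕ) : ℝ := if k = 0 then W else if Even k then 2*W else -(2*W)
noncomputable def dd (W k : ℕ) : ℝ := if k = 0 then 1 - 1/W else -(2/W)

lemma sum_cc (W j : ℕ) : ∑ k ∈ range (j+1), cc W k = if Even j then (W:ℝ) else -W := by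
  induction j with
  | zero => simp [cc]
  | succ j ih =>
    rw [Finset.sum_range_succ, ih]
    have h : cc W (j+1) = if Even (j+1) then 2*(W:ℝ) else -(2*W) := by
      simp [cc]
    rw [h]
    rcases Nat.even_or_odd j with he | ho
    · rw [if_pos he, if_neg (by simp [Nat.even_add_one, he]), if_neg (by simp [Nat.even_add_one, he])]
      ring
    · rw [if_neg (by simp [Nat.not_even_iff_odd.mpr ho]),
        if_pos (by simp [Nat.even_add_one, Nat.not_even_iff_odd.mpr ho]),
        if_pos (by simp [Nat.even_add_one, Nat.not_even_iff_odd.mpr ho])]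
      ring

lemma sum_cck (W j : ℕ) (hW : (W:ℝ) ≠ 0) :
    ∑ k ∈ range (j+1), cc W k * (k/W) = if Even j then (j:ℝ) else -((j:ℝ)+1) := by
  induction j with
  | zero => simp [cc]
  | succ j ih =>
    rw [Finset.sum_range_succ, ih]
    have h : cc W (j+1) = if Even (j+1) then 2*(W:ℝ) else -(2*W) := by
      simp [cc]
    rw [h]
    have hc : (W:ℝ) * (((j:ℝ)+1)/W) = (j:ℝ)+1 := by field_simp
    rcases Nat.even_or_odd j with he | ho
    · rw [if_pos he, if_neg (by simp [Nat.even_add_one, he]), if_neg (by simp [Nat.even_add_one, he])]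
      push_cast
      nlinarith [hc]
    · rw [if_neg (by simp [Nat.not_even_iff_odd.mpr ho]),
        if_pos (by simp [Nat.even_add_one, Nat.not_even_iff_odd.mpr ho]),
        if_pos (by simp [Nat.even_add_one, Nat.not_even_iff_odd.mpr ho])]
      push_cast
      nlinarith [hc]

lemma sum_dd (W j : ℕ) : ∑ k ∈ range (j+1), dd W k = 1 - (2*(j:ℝ)+1)/W := by
  induction j with
  | zero => simp [dd]
  | succ j ih =>
    rw [Finset.sum_range_succ, ih]
    have h : dd W (j+1) = -(2/(W:ℝ)) := by simp [dd]
    rw [h]; push_cast; ring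

lemma sum_ddk (W j : ℕ) : ∑ k ∈ range (j+1), dd W k * (k/W) = -((j:ℝ)*((j:ℝ)+1))/(W:ℝ)^2 := by
  induction j with
  | zero => simp [dd]
  | succ j ih =>
    rw [Finset.sum_range_succ, ih]
    have h : dd W (j+1) = -(2/(W:ℝ)) := by simp [dd]
    rw [h]; push_cast; field_simp; ring
open Finset

lemma exists_piece {W : ℕ} (hW : 1 ≤ W) {s : ℝ} (h0 : 0 ≤ s) (h1 : s ≤ 1) :
    ∃ j : ℕ, j + 1 ≤ W ∧ (j:ℝ) ≤ (W:ℝ) * s ∧ (W:ℝ) * s ≤ (j:ℝ) + 1 := by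
  have hW0 : (0:ℝ) < W := by exact_mod_cast hW
  have hcast : ((W - 1 : ℕ) : ℝ) = (W:ℝ) - 1 := by
    push_cast [Nat.cast_sub hW]; ring
  by_cases hc : ⌊(W:ℝ) * s⌋₊ + 1 ≤ W
  · refine ⟨⌊(W:ℝ) * s⌋₊, hc, Nat.floor_le (by positivity), ?_⟩
    have := Nat.lt_floor_add_one ((W:ℝ) * s)
    linarith
  · push_neg at hc
    have hfl : (W:ℝ) ≤ ⌊(W:ℝ) * s⌋₊ := by exact_mod_cast (by omega : W ≤ ⌊(W:ℝ)*s⌋₊)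
    have hfl2 : ((⌊(W:ℝ) * s⌋₊ : ℕ) : ℝ) ≤ (W:ℝ) * s := Nat.floor_le (by positivity)
    refine ⟨W - 1, by omega, ?_, ?_⟩
    · rw [hcast]; linarith
    · rw [hcast]; nlinarith

lemma sum_relu_split {W j : ℕ} (hj : j + 1 ≤ W) {s : ℝ} (e : ℕ → ℝ)
    (h1 : (j:ℝ) ≤ (W:ℝ) * s) (h2 : (W:ℝ) * s ≤ (j:ℝ) + 1) (hW : 1 ≤ W) :
    ∑ k ∈ range W, e k * relu (s - k/W) = ∑ k ∈ range (j+1), e k * (s - k/W) := by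
  have hW0 : (0:ℝ) < W := by exact_mod_cast hW
  rw [← Finset.sum_subset (Finset.range_subset_range.mpr hj)]
  · apply Finset.sum_congr rfl
    intro k hk
    rw [Finset.mem_range] at hk
    have hk' : (k:ℝ) ≤ j := by exact_mod_cast Nat.lt_succ_iff.mp hk
    have : (k:ℝ)/W ≤ s := by
      rw [div_le_iff₀ hW0]
      nlinarith
    rw [relu_of_nonneg (by linarith)]
  · intro k _ hk
    rw [Finset.mem_range, not_lt] at hk
    have hk' : (j:ℝ) + 1 ≤ (k:ℝ) := by exact_mod_cast hk
    have : s ≤ (k:ℝ)/W := by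
      rw [le_div_iff₀ hW0]
      nlinarith
    rw [relu_of_nonpos (by linarith), mul_zero]

lemma sumA {W : ℕ} (hW : 1 ≤ W) {s : ℝ} (h0 : 0 ≤ s) (h1 : s ≤ 1) :
    ∑ k ∈ range W, cc W k * relu (s - k/W) = wf ((W:ℝ) * s) := by
  have hW0 : (0:ℝ) < W := by exact_mod_cast hW
  obtain ⟨j, hj, hj1, hj2⟩ := exists_piece hW h0 h1
  rw [sum_relu_split hj (cc W) hj1 hj2 hW]
  have hsum : ∑ k ∈ range (j+1), cc W k * (s - k/W)
      = (∑ k ∈ range (j+1), cc W k) * s - ∑ k ∈ range (j+1), cc W k * (k/W) := by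
    rw [Finset.sum_mul, ← Finset.sum_sub_distrib]
    apply Finset.sum_congr rfl; intro k _; ring
  rw [hsum, sum_cc, sum_cck W j (ne_of_gt hW0), wf_interval j _ hj1 hj2]
  rcases Nat.even_or_odd j with he | ho
  · rw [if_pos he, if_pos he, if_pos he]
  · rw [if_neg (by simp [Nat.not_even_iff_odd.mpr ho]), if_neg (by simp [Nat.not_even_iff_odd.mpr ho]),
      if_neg (by simp [Nat.not_even_iff_odd.mpr ho])]
    ring

lemma sumB {W : ℕ} (hW : 1 ≤ W) {s : ℝ} (h0 : 0 ≤ s) (h1 : s ≤ 1) :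
    ∑ k ∈ range W, dd W k * relu (s - k/W) = pf s - pf ((W:ℝ) * s)/(W:ℝ)^2 := by
  have hW0 : (0:ℝ) < W := by exact_mod_cast hW
  obtain ⟨j, hj, hj1, hj2⟩ := exists_piece hW h0 h1
  rw [sum_relu_split hj (dd W) hj1 hj2 hW]
  have hsum : ∑ k ∈ range (j+1), dd W k * (s - k/W)
      = (∑ k ∈ range (j+1), dd W k) * s - ∑ k ∈ range (j+1), dd W k * (k/W) := by
    rw [Finset.sum_mul, ← Finset.sum_sub_distrib]
    apply Finset.sum_congr rfl; intro k _; ring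
  rw [hsum, sum_dd, sum_ddk]
  have hps : pf s = s * (1 - s) := by
    have := pf_interval 0 s (by push_cast; linarith) (by push_cast; linarith)
    push_cast at this
    rw [this]; ring
  have hpw : pf ((W:ℝ) * s) = ((W:ℝ)*s - j) * ((j:ℝ) + 1 - (W:ℝ)*s) := by
    have := pf_interval (j:ℤ) ((W:ℝ)*s) (by push_cast; linarith) (by push_cast; linarith)
    push_cast at this
    rw [this]
  rw [hps, hpw]
  field_simp
  ring
noncomputable def gg (W : ℕ) (s : ℝ) : ℝ := pf s - pf ((W:ℝ) * s)/(W:ℝ)^2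
noncomputable def ub (W : ℕ) (u : ℝ) (ℓ : ℕ) : ℝ := wf ((W:ℝ)^ℓ * u)
noncomputable def PP (W : ℕ) (u v : ℝ) (j : ℕ) : ℝ :=
  ∑ ℓ ∈ range j, ((W:ℝ)^(2*ℓ))⁻¹ * (gg W (ub W u ℓ) - gg W (ub W v ℓ))

lemma pf_wf_one (z : ℝ) : pf (wf z) = pf z := by
  have := pf_wf 1 z; simpa using this

lemma ub_nonneg (W : ℕ) (u : ℝ) (ℓ : ℕ) : 0 ≤ ub W u ℓ := wf_nonneg _
lemma ub_le_one (W : ℕ) (u : ℝ) (ℓ : ℕ) : ub W u ℓ ≤ 1 := wf_le_one _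

lemma ub_zero {W : ℕ} {u : ℝ} (h0 : 0 ≤ u) (h1 : u ≤ 1) : ub W u 0 = u := by
  unfold ub; rw [pow_zero, one_mul, wf_id h0 h1]

lemma ub_succ (W : ℕ) (u : ℝ) (ℓ : ℕ) : wf ((W:ℝ) * ub W u ℓ) = ub W u (ℓ+1) := by
  unfold ub; rw [wf_nat_mul_wf]; congr 1; ring

lemma PP_zero (W : ℕ) (u v : ℝ) : PP W u v 0 = 0 := by simp [PP]

lemma PP_succ (W : ℕ) (u v : ℝ) (j : ℕ) :
    PP W u v (j+1) = PP W u v j + ((W:ℝ)^(2*j))⁻¹ * (gg W (ub W u j) - gg W (ub W v j)) := by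
  simp [PP, Finset.sum_range_succ]

lemma gg_abs {W : ℕ} (hW : 1 ≤ W) (s : ℝ) : |gg W s| ≤ 1/2 := by
  have h2 : (1:ℝ) ≤ (W:ℝ)^2 := by
    have : (1:ℝ) ≤ (W:ℝ) := by exact_mod_cast hW
    nlinarith
  have hd1 : pf ((W:ℝ)*s)/(W:ℝ)^2 ≤ pf ((W:ℝ)*s) := div_le_self (pf_nonneg _) h2
  have hd0 : 0 ≤ pf ((W:ℝ)*s)/(W:ℝ)^2 := div_nonneg (pf_nonneg _) (sq_nonneg _)
  have := pf_nonneg s; have := pf_le_quarter s; have := pf_le_quarter ((W:ℝ)*s)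
  rw [gg, abs_le]; constructor <;> nlinarith

lemma gg_eq_zero (s : ℝ) : gg 1 s = 0 := by
  rw [gg]; norm_num

lemma gg_sub_abs {W : ℕ} (hW : 1 ≤ W) (s t : ℝ) : |gg W s - gg W t| ≤ 1/2 := by
  rcases eq_or_lt_of_le hW with h1 | h2
  · rw [← h1, gg_eq_zero, gg_eq_zero]; norm_num
  · have hW2 : (2:ℝ) ≤ (W:ℝ) := by exact_mod_cast h2
    have hpos : (0:ℝ) < (W:ℝ)^2 := by positivity
    have e1 : pf ((W:ℝ)*s)/(W:ℝ)^2 ≤ 1/16 := by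
      rw [div_le_iff₀ hpos]
      nlinarith [pf_le_quarter ((W:ℝ)*s)]
    have e2 : pf ((W:ℝ)*t)/(W:ℝ)^2 ≤ 1/16 := by
      rw [div_le_iff₀ hpos]
      nlinarith [pf_le_quarter ((W:ℝ)*t)]
    have e3 : 0 ≤ pf ((W:ℝ)*s)/(W:ℝ)^2 := div_nonneg (pf_nonneg _) (le_of_lt hpos)
    have e4 : 0 ≤ pf ((W:ℝ)*t)/(W:ℝ)^2 := div_nonneg (pf_nonneg _) (le_of_lt hpos)
    rw [gg, gg, abs_le]
    constructor <;>
      nlinarith [pf_nonneg s, pf_nonneg t, pf_le_quarter s, pf_le_quarter t]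

lemma PP_abs {W : ℕ} (hW : 1 ≤ W) (u v : ℝ) (j : ℕ) : |PP W u v j| ≤ 1 := by
  rcases eq_or_lt_of_le hW with h1 | h2
  · have hg : ∀ s, gg W s = 0 := by
      intro s; rw [← h1]; exact gg_eq_zero s
    simp [PP, hg]
  · have hW2 : (2:ℝ) ≤ (W:ℝ) := by exact_mod_cast h2
    calc |PP W u v j| ≤ ∑ ℓ ∈ range j, |((W:ℝ)^(2*ℓ))⁻¹ * (gg W (ub W u ℓ) - gg W (ub W v ℓ))| :=
        Finset.abs_sum_le_sum_abs _ _
    _ ≤ ∑ ℓ ∈ range j, (1/2) * (1/4:ℝ)^ℓ := by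
        apply Finset.sum_le_sum
        intro ℓ _
        rw [abs_mul]
        have hWR : (0:ℝ) < (W:ℝ) := by exact_mod_cast Nat.lt_of_lt_of_le Nat.zero_lt_one hW
        have hpow : (0:ℝ) < (W:ℝ)^(2*ℓ) := by positivity
        have habs1 : |((W:ℝ)^(2*ℓ))⁻¹| = ((W:ℝ)^(2*ℓ))⁻¹ := abs_of_pos (by positivity)
        have habs2 : |gg W (ub W u ℓ) - gg W (ub W v ℓ)| ≤ 1/2 := gg_sub_abs hW _ _
        have hinv : ((W:ℝ)^(2*ℓ))⁻¹ ≤ (1/4:ℝ)^ℓ := by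
          rw [pow_mul]
          have h4 : (4:ℝ)^ℓ ≤ ((W:ℝ)^2)^ℓ := by
            apply pow_le_pow_left₀ (by norm_num)
            nlinarith
          have h14 : ((1:ℝ)/4)^ℓ = ((4:ℝ)^ℓ)⁻¹ := by
            rw [div_pow, one_pow, one_div]
          rw [h14]
          apply inv_anti₀ (by positivity) h4
        calc |((W:ℝ)^(2*ℓ))⁻¹| * |gg W (ub W u ℓ) - gg W (ub W v ℓ)|
            ≤ ((W:ℝ)^(2*ℓ))⁻¹ * (1/2) := by
              rw [habs1]; exact mul_le_mul_of_nonneg_left habs2 (by positivity)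
        _ ≤ (1/4:ℝ)^ℓ * (1/2) := mul_le_mul_of_nonneg_right hinv (by norm_num)
        _ = (1/2) * (1/4:ℝ)^ℓ := by ring
    _ ≤ 1 := by
        rw [← Finset.mul_sum, geom_sum_eq (by norm_num : (1/4:ℝ) ≠ 1)]
        have h0 : (0:ℝ) ≤ (1/4:ℝ)^j := by positivity
        rw [mul_comm, ← le_div_iff₀ (by norm_num : (0:ℝ) < 1/2),
          div_le_iff_of_neg (by norm_num : (1/4:ℝ) - 1 < 0)]
        linarith

lemma tele {W : ℕ} (hW : 1 ≤ W) {u : ℝ} (hu0 : 0 ≤ u) (hu1 : u ≤ 1) (L : ℕ) :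
    ∑ ℓ ∈ range L, ((W:ℝ)^(2*ℓ))⁻¹ * gg W (ub W u ℓ)
      = u * (1 - u) - ((W:ℝ)^(2*L))⁻¹ * pf ((W:ℝ)^L * u) := by
  have hWR : (0:ℝ) < (W:ℝ) := by exact_mod_cast Nat.lt_of_lt_of_le Nat.zero_lt_one hW
  have hW0 : (W:ℝ) ≠ 0 := ne_of_gt hWR
  have hterm : ∀ ℓ : ℕ, ((W:ℝ)^(2*ℓ))⁻¹ * gg W (ub W u ℓ)
      = ((W:ℝ)^(2*ℓ))⁻¹ * pf ((W:ℝ)^ℓ * u) - ((W:ℝ)^(2*(ℓ+1)))⁻¹ * pf ((W:ℝ)^(ℓ+1) * u) := by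
    intro ℓ
    have h1 : pf (ub W u ℓ) = pf ((W:ℝ)^ℓ * u) := pf_wf_one _
    have h2 : pf ((W:ℝ) * ub W u ℓ) = pf ((W:ℝ)^(ℓ+1) * u) := by
      unfold ub; rw [pf_wf]; congr 1; ring
    have hpw : (W:ℝ)^(2*(ℓ+1)) = (W:ℝ)^(2*ℓ) * (W:ℝ)^2 := by
      have he : 2*(ℓ+1) = 2*ℓ + 2 := by ring
      rw [he, pow_add]
    rw [gg, h1, h2, hpw]
    have hp1 : (W:ℝ)^(2*ℓ) ≠ 0 := by positivity
    field_simp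
    try ring
  rw [Finset.sum_congr rfl fun ℓ _ => hterm ℓ,
    Finset.sum_range_sub' (fun ℓ => ((W:ℝ)^(2*ℓ))⁻¹ * pf ((W:ℝ)^ℓ * u)) L]
  have hpf : pf u = u * (1 - u) := by
    have := pf_interval 0 u (by push_cast; linarith) (by push_cast; linarith)
    push_cast at this
    rw [this]; ring
  simp only [Nat.mul_zero, pow_zero, inv_one, one_mul, hpf]
lemma PP_formula {W : ℕ} (hW : 1 ≤ W) {u v : ℝ} (hu0 : 0 ≤ u) (hu1 : u ≤ 1)
    (hv0 : 0 ≤ v) (hv1 : v ≤ 1) (L : ℕ) :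
    PP W u v L = (u * (1 - u) - v * (1 - v))
      - ((W:ℝ)^(2*L))⁻¹ * (pf ((W:ℝ)^L * u) - pf ((W:ℝ)^L * v)) := by
  have hsplit : PP W u v L = (∑ ℓ ∈ range L, ((W:ℝ)^(2*ℓ))⁻¹ * gg W (ub W u ℓ))
      - ∑ ℓ ∈ range L, ((W:ℝ)^(2*ℓ))⁻¹ * gg W (ub W v ℓ) := by
    rw [PP, ← Finset.sum_sub_distrib]
    apply Finset.sum_congr rfl; intro ℓ _; ring
  rw [hsplit, tele hW hu0 hu1 L, tele hW hv0 hv1 L]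
  ring

/-- weight matrix entries -/
noncomputable def Ac (W L : ℕ) (ℓ i j : ℕ) : ℝ :=
  if ℓ = 0 then
    (if i < W then 1/4
     else if i < 2*W then (if j = 0 then 1/4 else -(1/4))
     else 0)
  else if ℓ < L then
    (if i < W then (if j < W then cc W j else 0)
     else if i < 2*W then (if j < W then 0 else if j < 2*W then cc W (j - W) else 0)
     else (if j < W then ((W:ℝ)^(2*(ℓ-1)))⁻¹ * dd W j
           else if j < 2*W then -(((W:ℝ)^(2*(ℓ-1)))⁻¹ * dd W (j - W))
           else 1))
  else
    (if j < W then -4 * ((W:ℝ)^(2*(L-1)))⁻¹ * dd W j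
     else if j < 2*W then 4 * ((W:ℝ)^(2*(L-1)))⁻¹ * dd W (j - W)
     else -4)

/-- bias entries -/
noncomputable def bc (W L : ℕ) (ℓ i : ℕ) : ℝ :=
  if ℓ = 0 then (if i < W then 1/2 - i/W else if i < 2*W then 1/2 - ((i:ℝ) - W)/W else 2)
  else if ℓ < L then (if i < W then -((i:ℝ)/W) else if i < 2*W then -(((i:ℝ) - W)/W) else 0)
  else 8

def wd (W L : ℕ) : ℕ → ℕ := fun ℓ => if ℓ = 0 then 2 else if ℓ = L + 1 then 1 else 2*W+1

lemma wd_zero (W L : ℕ) : wd W L 0 = 2 := by simp [wd]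
lemma wd_mid (W L : ℕ) {j : ℕ} (h1 : 1 ≤ j) (h2 : j ≤ L) : wd W L j = 2*W+1 := by
  rw [wd, if_neg (by omega), if_neg (by omega)]

noncomputable def net (W L : ℕ) : MLP 2 1 where
  depth := L
  width := wd W L
  width_in := by simp [wd]
  width_out := by simp [wd]
  A := fun ℓ => Matrix.of fun i j => Ac W L ℓ i.val j.val
  b := fun ℓ i => bc W L ℓ i.val

/-- target value of hidden layer `j ≥ 1`, unit `i`. -/
noncomputable def VV (W : ℕ) (u v : ℝ) (j i : ℕ) : ℝ :=
  if i < W then relu (ub W u (j-1) - (i:ℝ)/W)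
  else if i < 2*W then relu (ub W v (j-1) - ((i:ℝ) - W)/W)
  else PP W u v (j-1) + 2

lemma net_layer_succ (W L : ℕ) (x : Fin 2 → ℝ) (ℓ : ℕ) (i : Fin (wd W L (ℓ+1))) :
    (net W L).layer x (ℓ+1) i =
      relu ((∑ k : Fin (wd W L ℓ), Ac W L ℓ i.val k.val * (net W L).layer x ℓ k)
        + bc W L ℓ i.val) := by
  simp [MLP.layer, Matrix.mulVec, dotProduct, net]
  rfl

lemma net_layer_zero (W L : ℕ) (x : Fin 2 → ℝ) (k : Fin (wd W L 0)) :
    (net W L).layer x 0 k = if k.val = 0 then x 0 else x 1 := by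
  have hk : k.val < 2 := by
    have := k.isLt
    simpa [wd] using this
  show x (Fin.cast (net W L).width_in k) = _
  rcases (by omega : k.val = 0 ∨ k.val = 1) with h | h
  · rw [if_pos h]; congr 1; exact Fin.ext h
  · rw [if_neg (by omega)]; congr 1; exact Fin.ext h

lemma sum_split (W : ℕ) (f : ℕ → ℝ) :
    ∑ k ∈ range (2*W+1), f k = (∑ k ∈ range W, f k) + (∑ k ∈ range W, f (W+k)) + f (2*W) := by
  have h1 : 2*W+1 = (W + W) + 1 := by omega
  rw [h1, Finset.sum_range_succ, Finset.sum_range_add]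
  have h2 : W + W = 2*W := (two_mul W).symm
  rw [h2]
lemma layer_formula (W L : ℕ) (hW : 1 ≤ W) (x : Fin 2 → ℝ) (u v : ℝ)
    (hu : u = (x 0 + x 1 + 2)/4) (hv : v = (x 0 - x 1 + 2)/4)
    (hu0 : 0 ≤ u) (hu1 : u ≤ 1) (hv0 : 0 ≤ v) (hv1 : v ≤ 1) :
    ∀ j, 1 ≤ j → j ≤ L → ∀ i : Fin (wd W L j), (net W L).layer x j i = VV W u v j i.val := by
  intro j
  induction j with
  | zero => omega
  | succ j ih =>
    intro _ hjL i
    have hiW : i.val < 2*W+1 := by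
      have h := i.isLt
      have hw := wd_mid W L (by omega : 1 ≤ j+1) hjL
      omega
    rw [net_layer_succ]
    rcases Nat.eq_zero_or_pos j with rfl | hj1
    · -- first hidden layer
      have hconv : (∑ k : Fin (wd W L 0), Ac W L 0 i.val k.val * (net W L).layer x 0 k)
          = ∑ k ∈ Finset.range 2, Ac W L 0 i.val k * (if k = 0 then x 0 else x 1) := by
        have e1 : (∑ k : Fin (wd W L 0), Ac W L 0 i.val k.val * (net W L).layer x 0 k)
            = ∑ k : Fin (wd W L 0), Ac W L 0 i.val k.val * (if k.val = 0 then x 0 else x 1) :=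
          Finset.sum_congr rfl fun k _ => by rw [net_layer_zero]
        rw [e1, Fin.sum_univ_eq_sum_range
          (fun n => Ac W L 0 i.val n * (if n = 0 then x 0 else x 1)) (wd W L 0), wd_zero]
      rw [hconv, Finset.sum_range_succ, Finset.sum_range_succ, Finset.sum_range_zero]
      by_cases h1 : i.val < W
      · rw [VV, if_pos h1]
        simp only [Ac, bc, if_pos rfl, if_pos h1, if_neg (one_ne_zero)]
        rw [ub_zero hu0 hu1]
        congr 1
        rw [hu]; push_cast; ring
      · by_cases h2 : i.val < 2*W
        · rw [VV, if_neg h1, if_pos h2]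
          simp only [Ac, bc, if_pos rfl, if_neg h1, if_pos h2, if_neg (one_ne_zero)]
          rw [ub_zero hv0 hv1]
          congr 1
          rw [hv]; push_cast; ring
        · rw [VV, if_neg h1, if_neg h2]
          simp only [Ac, bc, if_pos rfl, if_neg h1, if_neg h2]
          rw [PP_zero]
          rw [relu_of_nonneg (by norm_num)]
          norm_num
    · -- later hidden layers
      have hjL' : j < L := by omega
      have hjne : ¬ (j = 0) := by omega
      have hj' : j - 1 + 1 = j := by omega
      have hconv : (∑ k : Fin (wd W L j), Ac W L j i.val k.val * (net W L).layer x j k)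
          = ∑ k ∈ Finset.range (2*W+1), Ac W L j i.val k * VV W u v j k := by
        have e1 : (∑ k : Fin (wd W L j), Ac W L j i.val k.val * (net W L).layer x j k)
            = ∑ k : Fin (wd W L j), Ac W L j i.val k.val * VV W u v j k.val :=
          Finset.sum_congr rfl fun k _ => by rw [ih hj1 (by omega) k]
        rw [e1, Fin.sum_univ_eq_sum_range
          (fun n => Ac W L j i.val n * VV W u v j n) (wd W L j), wd_mid W L hj1 (by omega)]
      rw [hconv, sum_split]
      by_cases h1 : i.val < W
      · have hb1 : ∑ k ∈ range W, Ac W L j i.val k * VV W u v j k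
            = ∑ k ∈ range W, cc W k * relu (ub W u (j-1) - (k:ℝ)/W) := by
          apply Finset.sum_congr rfl; intro k hk
          have hkW := Finset.mem_range.mp hk
          rw [Ac, if_neg hjne, if_pos hjL', if_pos h1, if_pos hkW, VV, if_pos hkW]
        have hb2 : ∑ k ∈ range W, Ac W L j i.val (W+k) * VV W u v j (W+k) = 0 := by
          apply Finset.sum_eq_zero; intro k hk
          rw [Ac, if_neg hjne, if_pos hjL', if_pos h1, if_neg (by omega)]
          exact zero_mul _
        have hb3 : Ac W L j i.val (2*W) * VV W u v j (2*W) = 0 := by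
          rw [Ac, if_neg hjne, if_pos hjL', if_pos h1, if_neg (by omega)]
          exact zero_mul _
        rw [hb1, hb2, hb3, sumA hW (ub_nonneg W u (j-1)) (ub_le_one W u (j-1)),
          ub_succ W u (j-1), hj']
        rw [VV, if_pos h1, bc, if_neg hjne, if_pos hjL', if_pos h1]
        have hj2 : j + 1 - 1 = j := rfl
        rw [hj2]
        congr 1
        ring
      · by_cases h2 : i.val < 2*W
        · have hb1 : ∑ k ∈ range W, Ac W L j i.val k * VV W u v j k = 0 := by
            apply Finset.sum_eq_zero; intro k hk
            have hkW := Finset.mem_range.mp hk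
            rw [Ac, if_neg hjne, if_pos hjL', if_neg h1, if_pos h2, if_pos hkW]
            exact zero_mul _
          have hb2 : ∑ k ∈ range W, Ac W L j i.val (W+k) * VV W u v j (W+k)
              = ∑ k ∈ range W, cc W k * relu (ub W v (j-1) - (k:ℝ)/W) := by
            apply Finset.sum_congr rfl; intro k hk
            have hkW := Finset.mem_range.mp hk
            rw [Ac, if_neg hjne, if_pos hjL', if_neg h1, if_pos h2, if_neg (by omega),
              if_pos (by omega), VV, if_neg (by omega), if_pos (by omega)]
            rw [Nat.add_sub_cancel_left]
            congr 2
            push_cast; ring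
          have hb3 : Ac W L j i.val (2*W) * VV W u v j (2*W) = 0 := by
            rw [Ac, if_neg hjne, if_pos hjL', if_neg h1, if_pos h2, if_neg (by omega),
              if_neg (by omega)]
            exact zero_mul _
          rw [hb1, hb2, hb3, sumA hW (ub_nonneg W v (j-1)) (ub_le_one W v (j-1)),
            ub_succ W v (j-1), hj']
          rw [VV, if_neg h1, if_pos h2, bc, if_neg hjne, if_pos hjL', if_neg h1, if_pos h2]
          have hj2 : j + 1 - 1 = j := rfl
          rw [hj2]
          congr 1
          ring
        · -- accumulator row
          have hb1 : ∑ k ∈ range W, Ac W L j i.val k * VV W u v j k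
              = ((W:ℝ)^(2*(j-1)))⁻¹ * gg W (ub W u (j-1)) := by
            have e1 : ∑ k ∈ range W, Ac W L j i.val k * VV W u v j k
                = ∑ k ∈ range W, ((W:ℝ)^(2*(j-1)))⁻¹ * (dd W k * relu (ub W u (j-1) - (k:ℝ)/W)) := by
              apply Finset.sum_congr rfl; intro k hk
              have hkW := Finset.mem_range.mp hk
              rw [Ac, if_neg hjne, if_pos hjL', if_neg h1, if_neg h2, if_pos hkW,
                VV, if_pos hkW]
              ring
            rw [e1, ← Finset.mul_sum, sumB hW (ub_nonneg W u (j-1)) (ub_le_one W u (j-1))]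
            simp only [gg]
          have hb2 : ∑ k ∈ range W, Ac W L j i.val (W+k) * VV W u v j (W+k)
              = -(((W:ℝ)^(2*(j-1)))⁻¹ * gg W (ub W v (j-1))) := by
            have e1 : ∑ k ∈ range W, Ac W L j i.val (W+k) * VV W u v j (W+k)
                = ∑ k ∈ range W, -(((W:ℝ)^(2*(j-1)))⁻¹ * (dd W k * relu (ub W v (j-1) - (k:ℝ)/W))) := by
              apply Finset.sum_congr rfl; intro k hk
              have hkW := Finset.mem_range.mp hk
              rw [Ac, if_neg hjne, if_pos hjL', if_neg h1, if_neg h2, if_neg (by omega),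
                if_pos (by omega), VV, if_neg (by omega), if_pos (by omega)]
              rw [Nat.add_sub_cancel_left]
              have harg : ((↑(W+k):ℝ) - W)/W = (k:ℝ)/W := by push_cast; ring
              rw [harg]
              ring
            rw [e1, Finset.sum_neg_distrib, ← Finset.mul_sum,
              sumB hW (ub_nonneg W v (j-1)) (ub_le_one W v (j-1))]
            simp only [gg]
          have hb3 : Ac W L j i.val (2*W) * VV W u v j (2*W) = PP W u v (j-1) + 2 := by
            rw [Ac, if_neg hjne, if_pos hjL', if_neg h1, if_neg h2, if_neg (by omega),
              if_neg (by omega), VV, if_neg (by omega), if_neg (by omega)]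
            exact one_mul _
          rw [hb1, hb2, hb3, VV, if_neg h1, if_neg h2, bc, if_neg hjne, if_pos hjL',
            if_neg h1, if_neg h2]
          have hj2 : j + 1 - 1 = j := rfl
          rw [hj2]
          have hPP : PP W u v j = PP W u v (j-1)
              + ((W:ℝ)^(2*(j-1)))⁻¹ * (gg W (ub W u (j-1)) - gg W (ub W v (j-1))) := by
            conv_lhs => rw [← hj']
            rw [PP_succ]
          rw [relu_of_nonneg ?hpos]
          · rw [hPP]; ring
          · have hPb := PP_abs hW u v (j-1)
            rw [abs_le] at hPb
            have hd := gg_sub_abs hW (ub W u (j-1)) (ub W v (j-1))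
            rw [abs_le] at hd
            have hinv0 : (0:ℝ) ≤ ((W:ℝ)^(2*(j-1)))⁻¹ := by positivity
            have hinv1 : ((W:ℝ)^(2*(j-1)))⁻¹ ≤ 1 := by
              have hWR : (1:ℝ) ≤ (W:ℝ) := by exact_mod_cast hW
              exact inv_le_one_of_one_le₀ (one_le_pow₀ hWR)
            have hone : 0 ≤ ((W:ℝ)^(2*(j-1)))⁻¹ *
                ((gg W (ub W u (j-1)) - gg W (ub W v (j-1))) + 1/2) :=
              mul_nonneg hinv0 (by linarith [hd.1])
            rw [mul_add] at hone
            have hF : ((W:ℝ)^(2*(j-1)))⁻¹ * gg W (ub W u (j-1))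
                + -(((W:ℝ)^(2*(j-1)))⁻¹ * gg W (ub W v (j-1)))
                = ((W:ℝ)^(2*(j-1)))⁻¹ * (gg W (ub W u (j-1)) - gg W (ub W v (j-1))) := by ring
            linarith [hPb.1]
lemma eval_formula (W L : ℕ) (hW : 1 ≤ W) (hL : 1 ≤ L) (x : Fin 2 → ℝ) (u v : ℝ)
    (hu : u = (x 0 + x 1 + 2)/4) (hv : v = (x 0 - x 1 + 2)/4)
    (hu0 : 0 ≤ u) (hu1 : u ≤ 1) (hv0 : 0 ≤ v) (hv1 : v ≤ 1) :
    (net W L).eval x 0 = -4 * PP W u v L := by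
  have hLne : ¬ (L = 0) := by omega
  have hLL : ¬ (L < L) := lt_irrefl L
  have hL' : L - 1 + 1 = L := by omega
  have hval : ∀ k : Fin (wd W L L), (net W L).layer x L k = VV W u v L k.val :=
    layer_formula W L hW x u v hu hv hu0 hu1 hv0 hv1 L hL (le_refl L)
  have hconv : ∀ n : ℕ, (∑ k : Fin (wd W L L), Ac W L L n k.val * (net W L).layer x L k)
      = ∑ k ∈ Finset.range (2*W+1), Ac W L L n k * VV W u v L k := by
    intro n
    have e1 : (∑ k : Fin (wd W L L), Ac W L L n k.val * (net W L).layer x L k)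
        = ∑ k : Fin (wd W L L), Ac W L L n k.val * VV W u v L k.val :=
      Finset.sum_congr rfl fun k _ => by rw [hval k]
    rw [e1, Fin.sum_univ_eq_sum_range (fun m => Ac W L L n m * VV W u v L m) (wd W L L),
      wd_mid W L hL (le_refl L)]
  have hblocks : ∀ n : ℕ, (∑ k ∈ Finset.range (2*W+1), Ac W L L n k * VV W u v L k)
      = -(4*((W:ℝ)^(2*(L-1)))⁻¹) * gg W (ub W u (L-1))
        + 4*((W:ℝ)^(2*(L-1)))⁻¹ * gg W (ub W v (L-1))
        + (-4) * (PP W u v (L-1) + 2) := by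
    intro n
    rw [sum_split]
    have hb1 : ∑ k ∈ range W, Ac W L L n k * VV W u v L k
        = -(4*((W:ℝ)^(2*(L-1)))⁻¹) * gg W (ub W u (L-1)) := by
      have e1 : ∑ k ∈ range W, Ac W L L n k * VV W u v L k
          = ∑ k ∈ range W, -(4*((W:ℝ)^(2*(L-1)))⁻¹)
              * (dd W k * relu (ub W u (L-1) - (k:ℝ)/W)) := by
        apply Finset.sum_congr rfl; intro k hk
        have hkW := Finset.mem_range.mp hk
        rw [Ac, if_neg hLne, if_neg hLL, if_pos hkW, VV, if_pos hkW]
        ring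
      rw [e1, ← Finset.mul_sum, sumB hW (ub_nonneg W u (L-1)) (ub_le_one W u (L-1))]
      simp only [gg]
    have hb2 : ∑ k ∈ range W, Ac W L L n (W+k) * VV W u v L (W+k)
        = 4*((W:ℝ)^(2*(L-1)))⁻¹ * gg W (ub W v (L-1)) := by
      have e1 : ∑ k ∈ range W, Ac W L L n (W+k) * VV W u v L (W+k)
          = ∑ k ∈ range W, (4*((W:ℝ)^(2*(L-1)))⁻¹)
              * (dd W k * relu (ub W v (L-1) - (k:ℝ)/W)) := by
        apply Finset.sum_congr rfl; intro k hk
        have hkW := Finset.mem_range.mp hk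
        rw [Ac, if_neg hLne, if_neg hLL, if_neg (by omega), if_pos (by omega),
          VV, if_neg (by omega), if_pos (by omega)]
        rw [Nat.add_sub_cancel_left]
        have harg : ((↑(W+k):ℝ) - W)/W = (k:ℝ)/W := by push_cast; ring
        rw [harg]
        ring
      rw [e1, ← Finset.mul_sum, sumB hW (ub_nonneg W v (L-1)) (ub_le_one W v (L-1))]
      simp only [gg]
    have hb3 : Ac W L L n (2*W) * VV W u v L (2*W) = (-4) * (PP W u v (L-1) + 2) := by
      rw [Ac, if_neg hLne, if_neg hLL, if_neg (by omega), if_neg (by omega),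
        VV, if_neg (by omega), if_neg (by omega)]
    rw [hb1, hb2, hb3]
  have hPP : PP W u v L = PP W u v (L-1)
      + ((W:ℝ)^(2*(L-1)))⁻¹ * (gg W (ub W u (L-1)) - gg W (ub W v (L-1))) := by
    conv_lhs => rw [← hL']
    rw [PP_succ]
  have hev : (net W L).eval x 0 = (∑ k : Fin (wd W L L),
        Ac W L L ((Fin.cast (net W L).width_out.symm (0:Fin 1)).val) k.val
          * (net W L).layer x L k)
      + bc W L L ((Fin.cast (net W L).width_out.symm (0:Fin 1)).val) := by
    simp only [MLP.eval, Matrix.mulVec, dotProduct]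
    rfl
  rw [hev, hconv, hblocks]
  have hbc : bc W L L ((Fin.cast (net W L).width_out.symm (0 : Fin 1))).val = 8 := by
    rw [bc, if_neg hLne, if_neg hLL]
  rw [hbc, hPP]
  ring
lemma eval_closed (W L : ℕ) (hW : 1 ≤ W) (hL : 1 ≤ L) (x y : ℝ)
    (hx1 : -1 ≤ x) (hx2 : x ≤ 1) (hy1 : -1 ≤ y) (hy2 : y ≤ 1) :
    (net W L).eval ![x, y] 0 = x*y + 4*((W:ℝ)^(2*L))⁻¹ *
      (pf ((W:ℝ)^L * ((x + y + 2)/4)) - pf ((W:ℝ)^L * ((x - y + 2)/4))) := by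
  have h0 : (![x,y] : Fin 2 → ℝ) 0 = x := rfl
  have h1 : (![x,y] : Fin 2 → ℝ) 1 = y := rfl
  rw [eval_formula W L hW hL ![x,y] ((x+y+2)/4) ((x-y+2)/4)
      (by rw [h0, h1]) (by rw [h0, h1])
      (by linarith) (by linarith) (by linarith) (by linarith),
    PP_formula hW (by linarith) (by linarith) (by linarith) (by linarith) L]
  ring

theorem statement6' (W L : ℕ) (hW : 1 ≤ W) (hL : 1 ≤ L) :
    ∃ φ ∈ NNScalar 2 (9 * W + 1) L,
      ∀ x ∈ Set.Icc (-1 : ℝ) 1, ∀ x' ∈ Set.Icc (-1 : ℝ) 1,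
        ∀ y ∈ Set.Icc (-1 : ℝ) 1, ∀ y' ∈ Set.Icc (-1 : ℝ) 1,
          |x * y - φ ![x, y]| ≤ 6 * (W : ℝ) ^ (-(L : ℤ)) ∧
          |φ ![x, y] - φ ![x', y']| ≤ 7 * |x - x'| + 7 * |y - y'| := by
  refine ⟨fun z => (net W L).eval z 0, ⟨(net W L).eval, ⟨net W L, rfl, ?_, rfl⟩, rfl⟩, ?_⟩
  · intro ℓ h1 h2
    have : (net W L).width ℓ = wd W L ℓ := rfl
    rw [this, wd_mid W L h1 h2]
    omega
  · intro x hx x' hx' y hy y' hy'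
    obtain ⟨hx1, hx2⟩ := hx
    obtain ⟨hx1', hx2'⟩ := hx'
    obtain ⟨hy1, hy2⟩ := hy
    obtain ⟨hy1', hy2'⟩ := hy'
    have hWR : (1:ℝ) ≤ (W:ℝ) := by exact_mod_cast hW
    have hW0 : (0:ℝ) < (W:ℝ) := by linarith
    set N : ℝ := (W:ℝ)^L with hN
    set c : ℝ := ((W:ℝ)^(2*L))⁻¹ with hc
    have hN0 : (0:ℝ) < N := by positivity
    have hN1 : (1:ℝ) ≤ N := one_le_pow₀ hWR
    have hc0 : (0:ℝ) ≤ c := by positivity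
    have hNN : (W:ℝ)^(2*L) = N * N := by
      rw [hN, ← pow_add]; congr 1; ring
    have hcN : c * N = N⁻¹ := by
      rw [hc, hNN, mul_inv, mul_assoc, inv_mul_cancel₀ (ne_of_gt hN0), mul_one]
    have hNinv : N⁻¹ ≤ 1 := inv_le_one_of_one_le₀ hN1
    have hzpow : (W : ℝ) ^ (-(L : ℤ)) = N⁻¹ := by
      rw [zpow_neg, zpow_natCast, hN]
    have hcle : c ≤ N⁻¹ := by
      rw [hc, hNN]
      rw [mul_inv]
      calc N⁻¹ * N⁻¹ ≤ 1 * N⁻¹ := by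
            apply mul_le_mul_of_nonneg_right hNinv (by positivity)
      _ = N⁻¹ := one_mul _
    have hf1 := eval_closed W L hW hL x y hx1 hx2 hy1 hy2
    have hf2 := eval_closed W L hW hL x' y' hx1' hx2' hy1' hy2'
    constructor
    · -- approximation bound
      show |x * y - (net W L).eval ![x, y] 0| ≤ 6 * (W : ℝ) ^ (-(L : ℤ))
      rw [hf1]
      have e : x*y - (x*y + 4*c*(pf (N * ((x + y + 2)/4)) - pf (N * ((x - y + 2)/4))))
          = -(4*c*(pf (N * ((x + y + 2)/4)) - pf (N * ((x - y + 2)/4)))) := by ring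
      rw [e, abs_neg, abs_mul]
      have hpd : |pf (N * ((x + y + 2)/4)) - pf (N * ((x - y + 2)/4))| ≤ 1/4 := by
        have := pf_nonneg (N * ((x + y + 2)/4)); have := pf_le_quarter (N * ((x + y + 2)/4))
        have := pf_nonneg (N * ((x - y + 2)/4)); have := pf_le_quarter (N * ((x - y + 2)/4))
        rw [abs_le]; constructor <;> linarith
      have h4c : |4*c| = 4*c := abs_of_nonneg (by linarith)
      rw [h4c, hzpow]
      calc 4*c * |pf (N * ((x + y + 2)/4)) - pf (N * ((x - y + 2)/4))|
          ≤ 4*c * (1/4) := mul_le_mul_of_nonneg_left hpd (by linarith)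
      _ = c := by ring
      _ ≤ N⁻¹ := hcle
      _ ≤ 6 * N⁻¹ := by
          have : (0:ℝ) ≤ N⁻¹ := by positivity
          linarith
    · -- Lipschitz bound
      show |(net W L).eval ![x, y] 0 - (net W L).eval ![x', y'] 0| ≤ 7 * |x - x'| + 7 * |y - y'|
      rw [hf1, hf2]
      set A := pf (N * ((x + y + 2)/4)) with hA
      set A' := pf (N * ((x' + y' + 2)/4)) with hA'
      set B := pf (N * ((x - y + 2)/4)) with hB
      set B' := pf (N * ((x' - y' + 2)/4)) with hB'
      have e : (x*y + 4*c*(A - B)) - (x'*y' + 4*c*(A' - B'))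
          = (x*y - x'*y') + (4*c*(A - A') - 4*c*(B - B')) := by ring
      rw [e]
      have t1 : |x*y - x'*y'| ≤ |x - x'| + |y - y'| := by
        have e2 : x*y - x'*y' = x*(y - y') + y'*(x - x') := by ring
        rw [e2]
        calc |x*(y - y') + y'*(x - x')| ≤ |x*(y - y')| + |y'*(x - x')| := abs_add_le _ _
        _ = |x| * |y - y'| + |y'| * |x - x'| := by rw [abs_mul, abs_mul]
        _ ≤ 1*|y - y'| + 1*|x - x'| := by
            have hxa : |x| ≤ 1 := abs_le.mpr ⟨hx1, hx2⟩
            have hya : |y'| ≤ 1 := abs_le.mpr ⟨hy1', hy2'⟩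
            have := abs_nonneg (y - y'); have := abs_nonneg (x - x')
            nlinarith
        _ = |x - x'| + |y - y'| := by ring
      have tA : |A - A'| ≤ N * ((|x - x'| + |y - y'|)/4) := by
        calc |A - A'| ≤ |N * ((x + y + 2)/4) - N * ((x' + y' + 2)/4)| := pf_lip _ _
        _ = |N| * |((x - x') + (y - y'))/4| := by rw [← abs_mul]; congr 1; ring
        _ = N * (|(x - x') + (y - y')|/4) := by
            rw [abs_of_pos hN0, abs_div]
            norm_num
        _ ≤ N * ((|x - x'| + |y - y'|)/4) := by
            apply mul_le_mul_of_nonneg_left _ (le_of_lt hN0)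
            have := abs_add_le (x - x') (y - y')
            linarith
      have tB : |B - B'| ≤ N * ((|x - x'| + |y - y'|)/4) := by
        calc |B - B'| ≤ |N * ((x - y + 2)/4) - N * ((x' - y' + 2)/4)| := pf_lip _ _
        _ = |N| * |((x - x') - (y - y'))/4| := by rw [← abs_mul]; congr 1; ring
        _ = N * (|(x - x') - (y - y')|/4) := by
            rw [abs_of_pos hN0, abs_div]
            norm_num
        _ ≤ N * ((|x - x'| + |y - y'|)/4) := by
            apply mul_le_mul_of_nonneg_left _ (le_of_lt hN0)
            have := abs_sub (x - x') (y - y')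
            linarith
      have tcA : 4*c*|A - A'| ≤ |x - x'| + |y - y'| := by
        calc 4*c*|A - A'| ≤ 4*c*(N * ((|x - x'| + |y - y'|)/4)) :=
              mul_le_mul_of_nonneg_left tA (by linarith)
        _ = (c*N) * (|x - x'| + |y - y'|) := by ring
        _ = N⁻¹ * (|x - x'| + |y - y'|) := by rw [hcN]
        _ ≤ 1 * (|x - x'| + |y - y'|) := by
            apply mul_le_mul_of_nonneg_right hNinv
            have := abs_nonneg (x - x'); have := abs_nonneg (y - y')
            linarith
        _ = |x - x'| + |y - y'| := one_mul _
      have tcB : 4*c*|B - B'| ≤ |x - x'| + |y - y'| := by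
        calc 4*c*|B - B'| ≤ 4*c*(N * ((|x - x'| + |y - y'|)/4)) :=
              mul_le_mul_of_nonneg_left tB (by linarith)
        _ = (c*N) * (|x - x'| + |y - y'|) := by ring
        _ = N⁻¹ * (|x - x'| + |y - y'|) := by rw [hcN]
        _ ≤ 1 * (|x - x'| + |y - y'|) := by
            apply mul_le_mul_of_nonneg_right hNinv
            have := abs_nonneg (x - x'); have := abs_nonneg (y - y')
            linarith
        _ = |x - x'| + |y - y'| := one_mul _
      have main : |(x*y - x'*y') + (4*c*(A - A') - 4*c*(B - B'))|
          ≤ |x*y - x'*y'| + (4*c*|A - A'| + 4*c*|B - B'|) := by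
        calc |(x*y - x'*y') + (4*c*(A - A') - 4*c*(B - B'))|
            ≤ |x*y - x'*y'| + |4*c*(A - A') - 4*c*(B - B')| := abs_add_le _ _
        _ ≤ |x*y - x'*y'| + (|4*c*(A - A')| + |4*c*(B - B')|) := by
            have := abs_sub (4*c*(A - A')) (4*c*(B - B'))
            linarith
        _ = |x*y - x'*y'| + (|4*c| * |A - A'| + |4*c| * |B - B'|) := by
            rw [abs_mul (4*c) (A - A'), abs_mul (4*c) (B - B')]
        _ = |x*y - x'*y'| + (4*c*|A - A'| + 4*c*|B - B'|) := by
            rw [abs_of_nonneg (by linarith : (0:ℝ) ≤ 4*c)]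
      have := abs_nonneg (x - x'); have := abs_nonneg (y - y')
      linarith

/-- approximation of the product function.  For any `W, L ∈ ℕ` there is
`φ ∈ NN_{2,1}(9W+1, L)` with `|xy − φ(x,y)| ≤ 6 W^{−L}` and
`|φ(x,y) − φ(x',y')| ≤ 7|x−x'| + 7|y−y'|` for all `x, x', y, y' ∈ [−1,1]`. -/
theorem statement6 (W L : ℕ) (hW : 1 ≤ W) (hL : 1 ≤ L) :
    ∃ φ ∈ NNScalar 2 (9 * W + 1) L,
      ∀ x ∈ Set.Icc (-1 : ℝ) 1, ∀ x' ∈ Set.Icc (-1 : ℝ) 1,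
        ∀ y ∈ Set.Icc (-1 : ℝ) 1, ∀ y' ∈ Set.Icc (-1 : ℝ) 1,
          |x * y - φ ![x, y]| ≤ 6 * (W : ℝ) ^ (-(L : ℤ)) ∧
          |φ ![x, y] - φ ![x', y']| ≤ 7 * |x - x'| + 7 * |y - y'| := by
  exact statement6' W L hW hL
end

section
/- Let A := {−1,1}^m be the set of all sign vectors in ℝ^m. For any m ≥ 8, there exists a subset B ⊆ A with cardinality |B| ≥ 2^{m/8} such that any two distinct sign vectors a ≠ a′ in B differ in more than ⌊m/8⌋ coordinates. -/
open Finset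

private lemma sum_choose_le' (m d : ℕ) (hd : d ≤ m) :
    7 ^ (m - d) * ∑ k ∈ Finset.range (d + 1), m.choose k ≤ 8 ^ m := by
  have h8 : (8:ℕ) ^ m = ∑ k ∈ Finset.range (m+1), 1 ^ k * 7 ^ (m - k) * m.choose k := by
    rw [show (8:ℕ) = 1 + 7 from rfl, add_pow]
    simp
  rw [h8, Finset.mul_sum]
  calc ∑ k ∈ Finset.range (d+1), 7 ^ (m - d) * m.choose k
      ≤ ∑ k ∈ Finset.range (d+1), 1 ^ k * 7 ^ (m - k) * m.choose k := by
        apply Finset.sum_le_sum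
        intro k hk
        simp only [one_pow, one_mul]
        exact Nat.mul_le_mul_right _ (Nat.pow_le_pow_right (by norm_num)
          (Nat.sub_le_sub_left (Nat.lt_succ_iff.mp (Finset.mem_range.mp hk)) m))
    _ ≤ ∑ k ∈ Finset.range (m+1), 1 ^ k * 7 ^ (m - k) * m.choose k :=
        Finset.sum_le_sum_of_subset (Finset.range_subset_range.mpr (by omega))

private lemma ball_card_le' (m d : ℕ) (b : Fin m → Bool) :
    (Finset.univ.filter fun x : Fin m → Bool =>
        (Finset.univ.filter fun i => b i ≠ x i).card ≤ d).card
      ≤ ∑ k ∈ Finset.range (d + 1), m.choose k := by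
  classical
  set T := (Finset.range (d+1)).biUnion
      (fun k => Finset.powersetCard k (Finset.univ : Finset (Fin m))) with hT
  have h1 : (Finset.univ.filter fun x : Fin m → Bool =>
        (Finset.univ.filter fun i => b i ≠ x i).card ≤ d).card ≤ T.card := by
    apply Finset.card_le_card_of_injOn (fun x => Finset.univ.filter fun i => b i ≠ x i)
    · intro x hx
      simp only [Finset.coe_filter, Set.mem_setOf_eq, Finset.mem_coe, Finset.mem_filter, Finset.mem_univ, true_and] at hx ⊢
      rw [hT, Finset.mem_biUnion]
      exact ⟨_, Finset.mem_range.mpr (Nat.lt_succ_of_le hx),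
        Finset.mem_powersetCard.mpr ⟨Finset.subset_univ _, rfl⟩⟩
    · intro x hx y hy hxy
      funext i
      have h := Finset.ext_iff.mp hxy i
      simp only [Finset.mem_filter, Finset.mem_univ, true_and] at h
      cases hbx : b i <;> cases hx : x i <;> cases hy' : y i <;> simp_all
  refine h1.trans ?_
  refine (Finset.card_biUnion_le).trans ?_
  apply le_of_eq
  apply Finset.sum_congr rfl
  intro k _
  simp [Finset.card_powersetCard]

set_option maxHeartbeats 1000000 in
private lemma exists_code' (m d : ℕ) :
    ∃ B : Finset (Fin m → Bool),
      (∀ x ∈ B, ∀ y ∈ B, x ≠ y →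
        d < (Finset.univ.filter fun i => x i ≠ y i).card) ∧
      2 ^ m ≤ B.card * ∑ k ∈ Finset.range (d + 1), m.choose k := by
  classical
  set P : Finset (Fin m → Bool) → Prop := fun S =>
    ∀ x ∈ S, ∀ y ∈ S, x ≠ y → d < (Finset.univ.filter fun i => x i ≠ y i).card with hP
  set F := (Finset.univ : Finset (Fin m → Bool)).powerset.filter P with hF
  have hne : F.Nonempty := ⟨∅, by simp [hF, hP]⟩
  obtain ⟨B, hBF, hmax⟩ := F.exists_max_image Finset.card hne
  have hBP : P B := (Finset.mem_filter.mp hBF).2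
  refine ⟨B, hBP, ?_⟩
  set f : (Fin m → Bool) → Finset (Fin m → Bool) := fun b =>
    Finset.univ.filter fun x => (Finset.univ.filter fun i => b i ≠ x i).card ≤ d with hf
  -- covering
  have hcov : (Finset.univ : Finset (Fin m → Bool)) ⊆ B.biUnion f := by
    intro x _
    rw [Finset.mem_biUnion]
    by_contra hcon
    push_neg at hcon
    simp only [hf, Finset.mem_filter, Finset.mem_univ, true_and, not_le] at hcon
    have hxB : x ∉ B := fun hxB => by
      have := hcon x hxB
      simp at this
    have hins : insert x B ∈ F := by
      rw [hF, Finset.mem_filter]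
      refine ⟨Finset.mem_powerset.mpr (Finset.subset_univ _), ?_⟩
      intro a ha b hb hab
      rcases Finset.mem_insert.mp ha with ha' | ha' <;>
        rcases Finset.mem_insert.mp hb with hb' | hb'
      · exact absurd (ha'.trans hb'.symm) hab
      · subst ha'
        have := hcon b hb'
        calc d < (Finset.univ.filter fun i => b i ≠ a i).card := this
          _ = (Finset.univ.filter fun i => a i ≠ b i).card := by
              congr 1; ext i; simp [ne_comm]
      · subst hb'
        exact hcon a ha'
      · exact hBP a ha' b hb' hab
    have := hmax _ hins
    rw [Finset.card_insert_of_notMem hxB] at this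
    omega
  have hball : ∀ b : Fin m → Bool, (f b).card ≤ ∑ k ∈ Finset.range (d + 1), m.choose k :=
    fun b => ball_card_le' m d b
  calc (2:ℕ) ^ m = (Finset.univ : Finset (Fin m → Bool)).card := by
        simp [Finset.card_univ]
    _ ≤ (B.biUnion f).card := Finset.card_le_card hcov
    _ ≤ ∑ b ∈ B, (f b).card := Finset.card_biUnion_le
    _ ≤ ∑ _b ∈ B, (∑ k ∈ Finset.range (d + 1), m.choose k) :=
        Finset.sum_le_sum (fun b _ => hball b)
    _ = B.card * ∑ k ∈ Finset.range (d + 1), m.choose k := by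
        rw [Finset.sum_const, smul_eq_mul]

/-- combinatorial packing of sign vectors.  For `m ≥ 8` there is a set
`B` of sign vectors in `{−1,1}^m` with `|B| ≥ 2^{m/8}` such that any two distinct elements
of `B` differ in more than `⌊m/8⌋` coordinates. -/
theorem statement12 (m : ℕ) (hm : 8 ≤ m) :
    ∃ B : Finset (Fin m → ℝ),
      (∀ a ∈ B, ∀ i, a i = 1 ∨ a i = -1) ∧
      (2 : ℝ) ^ ((m : ℝ) / 8) ≤ (B.card : ℝ) ∧
      (∀ a ∈ B, ∀ a' ∈ B, a ≠ a' →
        m / 8 < (Finset.univ.filter fun i => a i ≠ a' i).card) := by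
  classical
  set d := m / 8 with hd_def
  have hd : d ≤ m := Nat.div_le_self _ _
  obtain ⟨B₀, hB₀dist, hB₀card⟩ := exists_code' m d
  set e : (Fin m → Bool) → (Fin m → ℝ) := fun b i => if b i then 1 else -1 with he
  have hinj : Function.Injective e := by
    intro b b' h
    funext i
    have := congrFun h i
    simp only [he] at this
    cases hb : b i <;> cases hb' : b' i <;> simp [hb, hb'] at this ⊢ <;> norm_num at this
  refine ⟨B₀.image e, ?_, ?_, ?_⟩
  · intro a ha i
    obtain ⟨b, _, rfl⟩ := Finset.mem_image.mp ha
    cases hb : b i <;> simp [he, hb]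
  · -- cardinality bound
    rw [Finset.card_image_of_injective _ hinj]
    have key : 2 ^ m * 7 ^ (m - d) ≤ B₀.card * 8 ^ m := by
      calc 2 ^ m * 7 ^ (m - d)
          ≤ (B₀.card * ∑ k ∈ Finset.range (d + 1), m.choose k) * 7 ^ (m - d) :=
            Nat.mul_le_mul_right _ hB₀card
        _ = B₀.card * (7 ^ (m - d) * ∑ k ∈ Finset.range (d + 1), m.choose k) := by ring
        _ ≤ B₀.card * 8 ^ m := Nat.mul_le_mul_left _ (sum_choose_le' m d hd)
    have hR : (2:ℝ) ^ m * 7 ^ (m - d) ≤ (B₀.card : ℝ) * 8 ^ m := by exact_mod_cast key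
    set t : ℝ := (m : ℝ) / 8 with ht_def
    have ht : 0 ≤ t := by positivity
    have htm : (m : ℝ) = 8 * t := by rw [ht_def]; ring
    have htd : (d : ℝ) ≤ t := by
      rw [hd_def, ht_def]
      exact_mod_cast Nat.cast_div_le
    have hmd : ((m - d : ℕ) : ℝ) = (m : ℝ) - (d : ℝ) := by
      exact Nat.cast_sub hd
    -- main rpow inequality : 2^t * 8^m ≤ 2^m * 7^(m-d)
    have main : (2:ℝ) ^ t * (8:ℝ) ^ (m:ℝ) ≤ (2:ℝ) ^ (m:ℝ) * (7:ℝ) ^ ((m:ℝ) - (d:ℝ)) := by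
      have h8 : (8:ℝ) ^ (m:ℝ) = (2:ℝ) ^ (3 * (m:ℝ)) := by
        rw [show (8:ℝ) = (2:ℝ) ^ (3:ℝ) by
          rw [show (3:ℝ) = ((3:ℕ):ℝ) by norm_num, Real.rpow_natCast]; norm_num,
          ← Real.rpow_mul (by norm_num)]
      have step1 : (2:ℝ) ^ t * (8:ℝ) ^ (m:ℝ) = (2:ℝ) ^ (17 * t) * (2:ℝ) ^ (m:ℝ) := by
        rw [h8, ← Real.rpow_add (by norm_num), ← Real.rpow_add (by norm_num)]
        congr 1
        rw [htm]; ring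
      rw [step1, mul_comm ((2:ℝ) ^ (m:ℝ)) _]
      apply mul_le_mul_of_nonneg_right ?_ (Real.rpow_nonneg (by norm_num) _)
      have h7 : (7:ℝ) ^ (7 * t) ≤ (7:ℝ) ^ ((m:ℝ) - (d:ℝ)) := by
        apply Real.rpow_le_rpow_of_exponent_le (by norm_num)
        rw [htm]; linarith
      refine le_trans ?_ h7
      rw [Real.rpow_mul (by norm_num : (0:ℝ) ≤ 2), Real.rpow_mul (by norm_num : (0:ℝ) ≤ 7)]
      apply Real.rpow_le_rpow (by positivity) ?_ ht
      rw [show (17:ℝ) = ((17:ℕ):ℝ) by norm_num, show (7:ℝ) = ((7:ℕ):ℝ) from rfl]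
      rw [Real.rpow_natCast, Real.rpow_natCast]
      norm_num
    -- convert npow/rpow and conclude
    have hconv : (2:ℝ) ^ t * (8:ℝ) ^ m ≤ (B₀.card : ℝ) * 8 ^ m := by
      calc (2:ℝ) ^ t * (8:ℝ) ^ m = (2:ℝ) ^ t * (8:ℝ) ^ (m:ℝ) := by
            rw [Real.rpow_natCast]
        _ ≤ (2:ℝ) ^ (m:ℝ) * (7:ℝ) ^ ((m:ℝ) - (d:ℝ)) := main
        _ = (2:ℝ) ^ m * (7:ℝ) ^ (m - d : ℕ) := by
            rw [← hmd, Real.rpow_natCast, Real.rpow_natCast]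
        _ ≤ (B₀.card : ℝ) * 8 ^ m := hR
    have h8pos : (0:ℝ) < (8:ℝ) ^ m := by positivity
    exact le_of_mul_le_mul_right hconv h8pos
  · intro a ha a' ha' hne'
    obtain ⟨b, hb, rfl⟩ := Finset.mem_image.mp ha
    obtain ⟨b', hb', rfl⟩ := Finset.mem_image.mp ha'
    have hbb' : b ≠ b' := fun h => hne' (by rw [h])
    have hfilter : (Finset.univ.filter fun i => e b i ≠ e b' i) =
        (Finset.univ.filter fun i => b i ≠ b' i) := by
      ext i
      simp only [Finset.mem_filter, Finset.mem_univ, true_and]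
      cases h1 : b i <;> cases h2 : b' i <;> simp [he, h1, h2] <;> norm_num
    rw [hfilter]
    exact hB₀dist b hb b' hb' hbb'
end
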